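/- Let 0 < ζ < 1 and define G_l(z,y) = (1/2)·e^{-|z-y|} - (1/2)·e^{z+y-2ζ} for z, y ∈ [0,ζ]. For every continuous f : [0,ζ] → ℝ, the function u₁(z) = ∫₀^ζ G_l(z,y) f(y) dy is twice continuously differentiable on [0,ζ], satisfies u₁(z) - u₁''(z) = f(z) for all z ∈ [0,ζ], and satisfies the boundary conditions u₁(0) = u₁'(0) and u₁(ζ) = 0. -/

import Mathlib

/-- The left-child kernel `G_l(z,y) = (1/2)e^{-|z-y|} - (1/2)e^{z+y-2ζ}` is the Green's
function of `u - u'' = f` on `[0,ζ]` with boundary conditions `u(0) = u'(0)`, `u(ζ) = 0`: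
for continuous `f`, the function `u₁(z) = ∫₀^ζ G_l(z,y) f(y) dy` is twice continuously
differentiable on `[0,ζ]`, satisfies the ODE there, and satisfies the boundary conditions. -/
theorem left_child_kernel_is_green_function
    (ζ : ℝ) (hζ0 : 0 < ζ) (hζ1 : ζ < 1)
    (f : ℝ → ℝ) (hf : ContinuousOn f (Set.Icc 0 ζ))
    (u₁ : ℝ → ℝ)
    (hu₁ : ∀ z, u₁ z = ∫ y in (0:ℝ)..ζ,
        ((1/2) * Real.exp (-|z - y|) - (1/2) * Real.exp (z + y - 2*ζ)) * f y) :
    ContDiffOn ℝ 2 u₁ (Set.Icc 0 ζ) ∧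
    (∀ z ∈ Set.Icc (0:ℝ) ζ,
      u₁ z - derivWithin (derivWithin u₁ (Set.Icc 0 ζ)) (Set.Icc 0 ζ) z = f z) ∧
    u₁ 0 = derivWithin u₁ (Set.Icc 0 ζ) 0 ∧
    u₁ ζ = 0 := by
  -- continuous extension of f by clamping
  set g : ℝ → ℝ := fun y => f (max 0 (min y ζ)) with hgdef
  have hgc : Continuous g := by
    apply hf.comp_continuous (continuous_const.max (continuous_id.min continuous_const))
    intro x
    exact ⟨le_max_left _ _, max_le hζ0.le (min_le_right _ _)⟩
  have hgeq : ∀ y ∈ Set.Icc (0:ℝ) ζ, g y = f y := by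
    intro y hy
    simp only [hgdef]
    rw [min_eq_left hy.2, max_eq_right hy.1]
  -- auxiliary functions
  set A : ℝ → ℝ := fun z => ∫ y in (0:ℝ)..z, Real.exp y * g y with hAdef
  set B : ℝ → ℝ := fun z => ∫ y in z..ζ, Real.exp (-y) * g y with hBdef
  set U : ℝ → ℝ := fun z => (1/2) * Real.exp (-z) * A z + (1/2) * Real.exp z * B z
      - (1/2) * A ζ * Real.exp (z - 2*ζ) with hUdef
  set V : ℝ → ℝ := fun z => -((1/2) * Real.exp (-z) * A z) + (1/2) * Real.exp z * B z
      - (1/2) * A ζ * Real.exp (z - 2*ζ) with hVdef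
  have hc1 : Continuous fun y => Real.exp y * g y := (Real.continuous_exp).mul hgc
  have hc2 : Continuous fun y => Real.exp (-y) * g y :=
    ((Real.continuous_exp).comp continuous_neg).mul hgc
  have hA : ∀ z, HasDerivAt A (Real.exp z * g z) z := by
    intro z
    exact intervalIntegral.integral_hasDerivAt_right (hc1.intervalIntegrable 0 z)
      (hc1.stronglyMeasurableAtFilter _ _) hc1.continuousAt
  have hB : ∀ z, HasDerivAt B (-(Real.exp (-z) * g z)) z := by
    intro z
    exact intervalIntegral.integral_hasDerivAt_left (hc2.intervalIntegrable z ζ)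
      (hc2.stronglyMeasurableAtFilter _ _) hc2.continuousAt
  have hexpneg : ∀ z : ℝ, HasDerivAt (fun z : ℝ => Real.exp (-z)) (-Real.exp (-z)) z := by
    intro z
    simpa using ((hasDerivAt_id z).neg).exp
  have hexpsh : ∀ z : ℝ, HasDerivAt (fun z : ℝ => Real.exp (z - 2*ζ)) (Real.exp (z - 2*ζ)) z := by
    intro z
    simpa using ((hasDerivAt_id z).sub_const (2*ζ)).exp
  have hU : ∀ z, HasDerivAt U (V z) z := by
    intro z
    have h1 := (((hexpneg z).mul (hA z)).const_mul (1/2 : ℝ))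
    have h2 := (((Real.hasDerivAt_exp z).mul (hB z)).const_mul (1/2 : ℝ))
    have h3 := ((hexpsh z).const_mul ((1/2) * A ζ))
    have h := (h1.add h2).sub h3
    convert h using 1
    · rfl
    · rfl
    · ext w; simp only [hUdef, Pi.add_apply, Pi.sub_apply, Pi.mul_apply, Pi.neg_apply]; ring
    · simp only [hVdef]; ring
  have hV : ∀ z, HasDerivAt V (U z - g z) z := by
    intro z
    have h1 := ((((hexpneg z).mul (hA z)).const_mul (1/2 : ℝ)).neg)
    have h2 := (((Real.hasDerivAt_exp z).mul (hB z)).const_mul (1/2 : ℝ))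
    have h3 := ((hexpsh z).const_mul ((1/2) * A ζ))
    have h := (h1.add h2).sub h3
    have hz : Real.exp (-z) * Real.exp z = 1 := by
      rw [← Real.exp_add]; simp
    convert h using 1
    · rfl
    · rfl
    · ext w; simp only [hVdef, Pi.add_apply, Pi.sub_apply, Pi.mul_apply, Pi.neg_apply]; ring
    · simp only [hUdef]
      linear_combination (g z) * hz
  -- the splitting identity
  have hsplit : ∀ z ∈ Set.Icc (0:ℝ) ζ, u₁ z = U z := by
    intro z hz
    have hker : Continuous fun y =>
        ((1/2) * Real.exp (-|z - y|) - (1/2) * Real.exp (z + y - 2*ζ)) * g y := by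
      apply Continuous.mul _ hgc
      apply Continuous.sub
      · exact continuous_const.mul (Real.continuous_exp.comp ((continuous_const.sub continuous_id).abs.neg))
      · exact continuous_const.mul (Real.continuous_exp.comp ((continuous_const.add continuous_id).sub continuous_const))
    rw [hu₁ z]
    have e1 : (∫ y in (0:ℝ)..ζ,
        ((1/2) * Real.exp (-|z - y|) - (1/2) * Real.exp (z + y - 2*ζ)) * f y)
        = ∫ y in (0:ℝ)..ζ,
        ((1/2) * Real.exp (-|z - y|) - (1/2) * Real.exp (z + y - 2*ζ)) * g y := by
      apply intervalIntegral.integral_congr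
      intro y hy
      rw [Set.uIcc_of_le hζ0.le] at hy
      dsimp only
      rw [hgeq y hy]
    rw [e1]
    have e2 : (∫ y in (0:ℝ)..z,
          ((1/2) * Real.exp (-|z - y|) - (1/2) * Real.exp (z + y - 2*ζ)) * g y)
        + (∫ y in z..ζ,
          ((1/2) * Real.exp (-|z - y|) - (1/2) * Real.exp (z + y - 2*ζ)) * g y)
        = ∫ y in (0:ℝ)..ζ,
          ((1/2) * Real.exp (-|z - y|) - (1/2) * Real.exp (z + y - 2*ζ)) * g y :=
      intervalIntegral.integral_add_adjacent_intervals
        (hker.intervalIntegrable 0 z) (hker.intervalIntegrable z ζ)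
    rw [← e2]
    -- left piece
    have eL : (∫ y in (0:ℝ)..z,
          ((1/2) * Real.exp (-|z - y|) - (1/2) * Real.exp (z + y - 2*ζ)) * g y)
        = ((1/2) * Real.exp (-z) - (1/2) * Real.exp (z - 2*ζ)) * A z := by
      rw [hAdef]
      rw [show (((1/2) * Real.exp (-z) - (1/2) * Real.exp (z - 2*ζ)) *
          ∫ y in (0:ℝ)..z, Real.exp y * g y)
          = ∫ y in (0:ℝ)..z, ((1/2) * Real.exp (-z) - (1/2) * Real.exp (z - 2*ζ))
              * (Real.exp y * g y) from
        (intervalIntegral.integral_const_mul _ _).symm]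
      apply intervalIntegral.integral_congr
      intro y hy
      rw [Set.uIcc_of_le hz.1] at hy
      have : |z - y| = z - y := abs_of_nonneg (by linarith [hy.2])
      dsimp only
      rw [this, show -(z - y) = y + (-z) by ring, Real.exp_add,
        show z + y - 2*ζ = (z - 2*ζ) + y by ring, Real.exp_add]
      ring
    -- right piece
    have eR : (∫ y in z..ζ,
          ((1/2) * Real.exp (-|z - y|) - (1/2) * Real.exp (z + y - 2*ζ)) * g y)
        = (1/2) * Real.exp z * B z - (1/2) * Real.exp (z - 2*ζ) * (A ζ - A z) := by
      have eR1 : (∫ y in z..ζ,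
            ((1/2) * Real.exp (-|z - y|) - (1/2) * Real.exp (z + y - 2*ζ)) * g y)
          = ∫ y in z..ζ, ((1/2) * Real.exp z * (Real.exp (-y) * g y)
              - (1/2) * Real.exp (z - 2*ζ) * (Real.exp y * g y)) := by
        apply intervalIntegral.integral_congr
        intro y hy
        rw [Set.uIcc_of_le hz.2] at hy
        have : |z - y| = y - z := by
          rw [abs_sub_comm]; exact abs_of_nonneg (by linarith [hy.1])
        dsimp only
        rw [this, show -(y - z) = z + (-y) by ring, Real.exp_add,
          show z + y - 2*ζ = (z - 2*ζ) + y by ring, Real.exp_add]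
        ring
      rw [eR1, intervalIntegral.integral_sub (f := fun y => 1/2 * Real.exp z * (Real.exp (-y) * g y))
        (g := fun y => 1/2 * Real.exp (z - 2*ζ) * (Real.exp y * g y))
        ((continuous_const.mul hc2).intervalIntegrable z ζ) ((continuous_const.mul hc1).intervalIntegrable z ζ),
        intervalIntegral.integral_const_mul, intervalIntegral.integral_const_mul]
      have hAz : A ζ - A z = ∫ y in z..ζ, Real.exp y * g y := by
        have : (∫ y in (0:ℝ)..z, Real.exp y * g y) + (∫ y in z..ζ, Real.exp y * g y)
            = ∫ y in (0:ℝ)..ζ, Real.exp y * g y :=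
          intervalIntegral.integral_add_adjacent_intervals
            (hc1.intervalIntegrable 0 z) (hc1.intervalIntegrable z ζ)
        simp only [hAdef]
        linarith [this]
      rw [hAz, hBdef]
    rw [eL, eR, hUdef]
    ring
  -- smoothness of U
  have hU1 : ∀ z, deriv U z = V z := fun z => (hU z).deriv
  have hV1 : ∀ z, deriv V z = U z - g z := fun z => (hV z).deriv
  have hUC2 : ContDiff ℝ 2 U := by
    rw [show (2 : WithTop ℕ∞) = 1 + 1 from rfl, contDiff_succ_iff_deriv]
    refine ⟨fun z => (hU z).differentiableAt, by simp, ?_⟩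
    rw [funext hU1, show (1 : WithTop ℕ∞) = 0 + 1 from rfl, contDiff_succ_iff_deriv]
    refine ⟨fun z => (hV z).differentiableAt, by simp, ?_⟩
    rw [funext hV1, contDiff_zero]
    exact (Differentiable.continuous (fun z => (hU z).differentiableAt)).sub hgc
  have hud : UniqueDiffOn ℝ (Set.Icc (0:ℝ) ζ) := uniqueDiffOn_Icc hζ0
  -- first derivative within
  have hd1 : ∀ z ∈ Set.Icc (0:ℝ) ζ, derivWithin u₁ (Set.Icc 0 ζ) z = V z := by
    intro z hz
    rw [derivWithin_congr hsplit (hsplit z hz)]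
    exact (hU z).hasDerivWithinAt.derivWithin (hud z hz)
  -- second derivative within
  have hd2 : ∀ z ∈ Set.Icc (0:ℝ) ζ,
      derivWithin (derivWithin u₁ (Set.Icc 0 ζ)) (Set.Icc 0 ζ) z = U z - g z := by
    intro z hz
    rw [derivWithin_congr hd1 (hd1 z hz)]
    exact (hV z).hasDerivWithinAt.derivWithin (hud z hz)
  refine ⟨?_, ?_, ?_, ?_⟩
  · exact (hUC2.contDiffOn).congr hsplit
  · intro z hz
    rw [hd2 z hz, hsplit z hz, hgeq z hz]
    ring
  · have h0 : (0:ℝ) ∈ Set.Icc (0:ℝ) ζ := ⟨le_refl _, hζ0.le⟩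
    rw [hd1 0 h0, hsplit 0 h0, hUdef, hVdef]
    have : A 0 = 0 := intervalIntegral.integral_same
    simp only [this]
    ring
  · have hζm : ζ ∈ Set.Icc (0:ℝ) ζ := ⟨hζ0.le, le_refl _⟩
    rw [hsplit ζ hζm, hUdef]
    have hBz : B ζ = 0 := intervalIntegral.integral_same
    simp only [hBz]
    rw [show ζ - 2*ζ = -ζ by ring]
    ring
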